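/- The Banach space ℓ¹ = ℓ¹(ℕ) is not the union of countably many weakly compact subsets: there is no sequence (Kₙ) of subsets of ℓ¹, each compact in the weak topology σ(ℓ¹, (ℓ¹)*), with ℓ¹ = ⋃ₙ Kₙ. -/

import Mathlib

open Filter Topology

noncomputable section AuxL1

local notation "E1" => lp (fun _ : ℕ => ℝ) 1

lemma l1_summable_norm (x : lp (fun _ : ℕ => ℝ) 1) : Summable fun n => ‖x n‖ := by
  have := (lp.memℓp x).summable (p := 1) (by norm_num)
  simpa using this

lemma l1_summable (x : lp (fun _ : ℕ => ℝ) 1) : Summable fun n => x n :=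
  (l1_summable_norm x).of_norm

lemma l1_norm_eq (x : lp (fun _ : ℕ => ℝ) 1) : ‖x‖ = ∑' n, ‖x n‖ := by
  have := lp.norm_eq_tsum_rpow (p := 1) (by norm_num) x
  simpa using this

/-- The summation functional on `ℓ¹`. -/
def l1SumCLM : lp (fun _ : ℕ => ℝ) 1 →L[ℝ] ℝ :=
  LinearMap.mkContinuous
    { toFun := fun x => ∑' n, x n
      map_add' := fun x y => by
        simp only [lp.coeFn_add, Pi.add_apply]
        exact Summable.tsum_add (l1_summable x) (l1_summable y)
      map_smul' := fun c x => by
        simp only [lp.coeFn_smul, Pi.smul_apply, smul_eq_mul, RingHom.id_apply]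
        exact tsum_mul_left }
    1 (fun x => by
      rw [one_mul, l1_norm_eq]
      exact norm_tsum_le_tsum_norm (l1_summable_norm x))

lemma l1SumCLM_apply (x : lp (fun _ : ℕ => ℝ) 1) : l1SumCLM x = ∑' n, x n := rfl

/-- The coordinate functionals on `ℓ¹`. -/
def l1CoordCLM (j : ℕ) : lp (fun _ : ℕ => ℝ) 1 →L[ℝ] ℝ :=
  LinearMap.mkContinuous
    { toFun := fun x => x j
      map_add' := fun x y => by simp
      map_smul' := fun c x => by simp }
    1 (fun x => by
      show ‖x j‖ ≤ 1 * ‖x‖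
      simpa using lp.norm_apply_le_norm one_ne_zero x j)

lemma l1CoordCLM_apply (j : ℕ) (x : lp (fun _ : ℕ => ℝ) 1) : l1CoordCLM j x = x j := rfl

section WeakAux

variable {E : Type*} [NormedAddCommGroup E] [NormedSpace ℝ E]

lemma weak_eval_continuous (g : E →L[ℝ] ℝ) :
    Continuous fun w : WeakSpace ℝ E => g ((toWeakSpace ℝ E).symm w) :=
  WeakBilin.eval_continuous (topDualPairing ℝ E).flip g

end WeakAux

set_option synthInstance.maxHeartbeats 1000000 in
lemma l1_separatingDual : SeparatingDual ℝ (lp (fun _ : ℕ => ℝ) 1) := inferInstance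

lemma mapClusterPt_const_eq {u : ℕ → ℝ} {y d : ℝ}
    (h : MapClusterPt y atTop u) (hev : ∀ᶠ k in atTop, u k = d) : y = d := by
  refine eq_of_forall_dist_le fun ε hε => ?_
  have hfreq : ∃ᶠ k in atTop, u k ∈ Metric.ball y ε :=
    mapClusterPt_iff_frequently.mp h _ (Metric.ball_mem_nhds _ hε)
  obtain ⟨k, hk1, hk2⟩ := (hfreq.and_eventually hev).exists
  have : dist d y < ε := by rwa [hk2] at hk1
  rw [dist_comm] at this
  exact this.le

end AuxL1

/-- `ℓ¹(ℕ)` is not the union of countably many weakly compact subsets. -/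
theorem lp_one_not_countable_union_weaklyCompact :
    ¬ ∃ K : ℕ → Set (lp (fun _ : ℕ => ℝ) 1),
        (∀ n, IsCompact (toWeakSpace ℝ (lp (fun _ : ℕ => ℝ) 1) '' K n)) ∧
        (⋃ n, K n) = Set.univ := by
  classical
  rintro ⟨K, hK, hunion⟩
  -- the weak topology is Hausdorff since the dual separates points
  have hT2 : T2Space (WeakSpace ℝ (lp (fun _ : ℕ => ℝ) 1)) := by
    refine T2Space.of_injective_continuous
      (f := fun (w : WeakSpace ℝ (lp (fun _ : ℕ => ℝ) 1)) (g : lp (fun _ : ℕ => ℝ) 1 →L[ℝ] ℝ) => g ((toWeakSpace ℝ (lp (fun _ : ℕ => ℝ) 1)).symm w)) ?_ ?_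
    · intro w1 w2 h
      by_contra hne
      have hne' : (toWeakSpace ℝ (lp (fun _ : ℕ => ℝ) 1)).symm w1 ≠ (toWeakSpace ℝ (lp (fun _ : ℕ => ℝ) 1)).symm w2 := fun hc => by
        apply hne
        simpa using congrArg (toWeakSpace ℝ (lp (fun _ : ℕ => ℝ) 1)) hc
      haveI := l1_separatingDual
      obtain ⟨g, hg⟩ := SeparatingDual.exists_separating_of_ne (R := ℝ) hne'
      exact hg (congrFun h g)
    · exact continuous_pi fun g => weak_eval_continuous g
  -- each `K n` is closed in the norm topology
  have hclosed : ∀ n, IsClosed (K n) := by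
    intro n
    have h1 : IsClosed (toWeakSpace ℝ (lp (fun _ : ℕ => ℝ) 1) '' K n) := (hK n).isClosed
    have h2 : K n = ⇑(toWeakSpace ℝ (lp (fun _ : ℕ => ℝ) 1)) ⁻¹' (toWeakSpace ℝ (lp (fun _ : ℕ => ℝ) 1) '' K n) :=
      (Set.preimage_image_eq _ (toWeakSpace ℝ (lp (fun _ : ℕ => ℝ) 1)).injective).symm
    rw [h2]
    exact h1.preimage (toWeakSpaceCLM ℝ (lp (fun _ : ℕ => ℝ) 1)).continuous
  -- Baire category: some `K n` contains a ball
  obtain ⟨n, x, hx⟩ := (nonempty_interior_of_iUnion_of_closed hclosed hunion).imp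
    fun n hn => hn
  obtain ⟨r, hr, hball⟩ := Metric.isOpen_iff.1 isOpen_interior x hx
  have hballK : Metric.ball x r ⊆ K n := hball.trans interior_subset
  set c : ℝ := r / 2 with hc
  have hc0 : c ≠ 0 := by positivity
  -- the sequence `a k = x + c • e_k` lies in the ball, hence in `K n`
  set a : ℕ → lp (fun _ : ℕ => ℝ) 1 := fun k => x + lp.single 1 k c with ha
  have hnorm_single : ∀ k : ℕ, ‖(lp.single 1 k c : lp (fun _ : ℕ => ℝ) 1)‖ = |c| := by
    intro k
    have := lp.norm_single (p := 1) (E := fun _ : ℕ => ℝ) (by norm_num)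
      k c
    simpa using this
  have haK : ∀ k, a k ∈ K n := by
    intro k
    apply hballK
    simp only [Metric.mem_ball, ha, dist_eq_norm, add_sub_cancel_left]
    rw [hnorm_single k, abs_of_pos (by positivity)]
    linarith
  -- get a weak cluster point of the sequence in the compact image
  set u : ℕ → WeakSpace ℝ (lp (fun _ : ℕ => ℝ) 1) := fun k => toWeakSpace ℝ (lp (fun _ : ℕ => ℝ) 1) (a k) with hu
  have hle : Filter.map u atTop ≤ Filter.principal (toWeakSpace ℝ (lp (fun _ : ℕ => ℝ) 1) '' K n) := by
    rw [Filter.le_principal_iff, Filter.mem_map]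
    filter_upwards with k
    exact Set.mem_image_of_mem _ (haK k)
  obtain ⟨z, hzmem, hz⟩ := (hK n).exists_clusterPt hle
  have hzcl : MapClusterPt z atTop u := hz
  set zE : lp (fun _ : ℕ => ℝ) 1 := (toWeakSpace ℝ (lp (fun _ : ℕ => ℝ) 1)).symm z with hzE
  -- transfer cluster point through a continuous functional
  have key : ∀ g : lp (fun _ : ℕ => ℝ) 1 →L[ℝ] ℝ, MapClusterPt (g zE) atTop fun k => g (a k) := by
    intro g
    have hcont : ContinuousAt (fun w : WeakSpace ℝ (lp (fun _ : ℕ => ℝ) 1) => g ((toWeakSpace ℝ (lp (fun _ : ℕ => ℝ) 1)).symm w)) z :=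
      (weak_eval_continuous g).continuousAt
    have := hzcl.continuousAt_comp hcont
    have heq : ((fun w : WeakSpace ℝ (lp (fun _ : ℕ => ℝ) 1) => g ((toWeakSpace ℝ (lp (fun _ : ℕ => ℝ) 1)).symm w)) ∘ u)
        = fun k => g (a k) := by
      funext k
      simp [hu]
    rwa [heq] at this
  -- coordinates: `zE j = x j` for all `j`
  have hcoord : ∀ j : ℕ, zE j = x j := by
    intro j
    have h1 := key (l1CoordCLM j)
    refine mapClusterPt_const_eq h1 ?_
    filter_upwards [eventually_gt_atTop j] with k hk
    have hkj : j ≠ k := fun h => by omega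
    simp [l1CoordCLM_apply, ha, lp.single_apply_ne (E := fun _ : ℕ => ℝ) 1 k c hkj, Pi.single_eq_of_ne hkj]
  -- the sum functional: `l1SumCLM zE = l1SumCLM x + c`
  have hsum_single : ∀ k : ℕ, (∑' m, (lp.single 1 k c : lp (fun _ : ℕ => ℝ) 1) m) = c := by
    intro k
    have : (fun m => (lp.single 1 k c : lp (fun _ : ℕ => ℝ) 1) m) = fun m => if m = k then c else 0 := by
      funext m
      by_cases h : m = k
      · subst h; simp [lp.single_apply_self]
      · simp [lp.single_apply_ne (E := fun _ : ℕ => ℝ) 1 k c h, h]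
    rw [this]
    exact tsum_ite_eq k (fun _ => c)
  have hsum : l1SumCLM zE = l1SumCLM x + c := by
    have h1 := key l1SumCLM
    refine mapClusterPt_const_eq h1 ?_
    filter_upwards with k
    have : l1SumCLM (a k) = l1SumCLM x + l1SumCLM (lp.single 1 k c) := by
      simp [ha, map_add]
    rw [this, l1SumCLM_apply (lp.single 1 k c), hsum_single k]
  -- but coordinatewise equality gives `l1SumCLM zE = l1SumCLM x`
  have hsum' : l1SumCLM zE = l1SumCLM x := by
    rw [l1SumCLM_apply, l1SumCLM_apply]
    exact tsum_congr hcoord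
  rw [hsum'] at hsum
  exact hc0 (by linarith)
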